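/- Let D be an integral domain with quotient field K, n a positive integer, and p ∈ D[X] a monic polynomial of degree n. For f ∈ K[X], f belongs to Int(Mₙᵖ(D), Mₙ(D)) if and only if the remainder of the Euclidean division of f by p in K[X] has all coefficients in D; equivalently, Int(Mₙᵖ(D), Mₙ(D)) = D[X] + p(X)·K[X] as subsets of K[X]. -/

import Mathlib

open Polynomial

/-- `IntOn D K S` is the set of polynomials `f ∈ K[X]` that are integer-valued on the set
`S ⊆ Mₙ(D)`: for every `M ∈ S`, evaluating `f` at the image of `M` in `Mₙ(K)` yields a matrix
all of whose entries lie in (the image of) `D`. -/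
def IntOn (D K : Type*) [CommRing D] [Field K] [Algebra D K] {n : ℕ}
    (S : Set (Matrix (Fin n) (Fin n) D)) : Set (Polynomial K) :=
  {f | ∀ M ∈ S, ∀ i j, ∃ d : D,
    algebraMap D K d = (Polynomial.aeval (M.map (algebraMap D K)) f) i j}

/-- Let `D` be a domain with quotient field `K`, `n` positive and `p ∈ D[X]`
monic of degree `n`.  Then `f ∈ Int(Mₙᵖ(D), Mₙ(D))` iff the remainder of the Euclidean division
of `f` by `p` in `K[X]` has all its coefficients in `D`; equivalently,
`Int(Mₙᵖ(D), Mₙ(D)) = D[X] + p·K[X]`. -/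
theorem intOn_charpoly_eq_iff (D K : Type*) [CommRing D] [IsDomain D] [Field K] [Algebra D K]
    [IsFractionRing D K] (n : ℕ) (hn : 0 < n) (p : D[X]) (hp : p.Monic) (hdeg : p.natDegree = n)
    (f : K[X]) :
    (f ∈ IntOn D K {M : Matrix (Fin n) (Fin n) D | M.charpoly = p} ↔
      ∀ i, ∃ c : D, algebraMap D K c = (f %ₘ (p.map (algebraMap D K))).coeff i) ∧
    (f ∈ IntOn D K {M : Matrix (Fin n) (Fin n) D | M.charpoly = p} ↔
      ∃ r q : K[X], (∀ i, ∃ c : D, algebraMap D K c = r.coeff i) ∧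
        f = r + p.map (algebraMap D K) * q) := by
  subst hdeg
  haveI : NeZero p.natDegree := ⟨hn.ne'⟩
  set φ := algebraMap D K with hφ
  set pK := p.map φ with hpKdef
  have hpK : pK.Monic := hp.map φ
  set pb := AdjoinRoot.powerBasis' hp with hpb
  set M0 : Matrix (Fin p.natDegree) (Fin p.natDegree) D :=
    Algebra.leftMulMatrix pb.basis pb.gen with hM0
  -- charpoly of M0
  have hchar : M0.charpoly = p := by
    rw [hM0]; refine Eq.trans (charpoly_leftMulMatrix pb) ?_
    symm
    apply minpoly.unique' D pb.gen hp
    · show (aeval (AdjoinRoot.root p)) p = 0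
      rw [AdjoinRoot.aeval_eq, AdjoinRoot.mk_self]
    · intro q hq
      rw [or_iff_not_imp_left]
      intro hq0 hroot
      have h1 : ((p.natDegree : ℕ) : WithBot ℕ) ≤ q.degree :=
        pb.dim_le_degree_of_root hq0 hroot
      rw [degree_eq_natDegree hp.ne_zero] at hq
      exact absurd (h1.trans_lt hq) (lt_irrefl _)
  have haux : pK.natDegree = p.natDegree := hp.natDegree_map φ
  set bK : Module.Basis (Fin p.natDegree) K (AdjoinRoot pK) :=
    (AdjoinRoot.powerBasisAux' hpK).reindex (finCongr haux) with hbKdef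
  have hbK : ∀ j : Fin p.natDegree, bK j = AdjoinRoot.root pK ^ (j : ℕ) := by
    intro j
    rw [hbKdef, Module.Basis.reindex_apply]
    have h1 : AdjoinRoot.powerBasisAux' hpK = (AdjoinRoot.powerBasis' hpK).basis := rfl
    have h2 := (AdjoinRoot.powerBasis' hpK).basis_eq_pow ((finCongr haux).symm j)
    rw [h1]; exact h2
  have hrepr : ∀ (x : AdjoinRoot pK) (i : Fin p.natDegree),
      bK.repr x i = (AdjoinRoot.modByMonicHom hpK x).coeff i := by
    intro x i
    rw [hbKdef, Module.Basis.repr_reindex, Finsupp.mapDomain_equiv_apply]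
    rw [AdjoinRoot.powerBasisAux'_repr_apply_to_fun]
    simp
  have hMK : M0.map φ = Algebra.leftMulMatrix bK (AdjoinRoot.root pK) := by
    ext i j
    rw [Matrix.map_apply, hM0]; erw [Algebra.leftMulMatrix_eq_repr_mul]; rw [
      Algebra.leftMulMatrix_eq_repr_mul, hbK, hrepr]
    have hgen : pb.gen * pb.basis j = AdjoinRoot.mk p (X ^ ((j : ℕ) + 1)) := by
      rw [PowerBasis.coe_basis]
      show AdjoinRoot.root p * AdjoinRoot.root p ^ (j : ℕ) = _
      rw [← pow_succ']
      rw [← AdjoinRoot.mk_X, ← map_pow]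
    have hgenK : AdjoinRoot.root pK * AdjoinRoot.root pK ^ (j : ℕ)
        = AdjoinRoot.mk pK (X ^ ((j : ℕ) + 1)) := by
      rw [← pow_succ', ← AdjoinRoot.mk_X, ← map_pow]
    rw [hgen, hgenK]
    have h2 : pb.basis.repr (AdjoinRoot.mk p (X ^ ((j : ℕ) + 1))) i
        = ((X ^ ((j : ℕ) + 1)) %ₘ p).coeff i := by
      show (AdjoinRoot.powerBasisAux' hp).repr _ i = _
      rw [AdjoinRoot.powerBasisAux'_repr_apply_to_fun, AdjoinRoot.modByMonicHom_mk]
    rw [h2, AdjoinRoot.modByMonicHom_mk]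
    rw [← Polynomial.coeff_map, Polynomial.map_modByMonic φ hp]
    simp
    rfl
  have keyEval : ∀ (g : K[X]) (i : Fin p.natDegree),
      (aeval (M0.map φ) g) i 0 = (g %ₘ pK).coeff i := by
    intro g i
    rw [hMK, Polynomial.aeval_algHom_apply (Algebra.leftMulMatrix bK) _ g,
      Algebra.leftMulMatrix_eq_repr_mul, hbK, hrepr, AdjoinRoot.aeval_eq]
    simp [AdjoinRoot.modByMonicHom_mk]
  -- forward: IntOn → coefficients of remainder lie in D
  have hfwd : f ∈ IntOn D K {M : Matrix (Fin p.natDegree) (Fin p.natDegree) D |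
      M.charpoly = p} → ∀ i, ∃ c : D, algebraMap D K c = (f %ₘ pK).coeff i := by
    intro hf i
    rcases lt_or_ge i p.natDegree with hi | hi
    · obtain ⟨d, hd⟩ := hf M0 hchar ⟨i, hi⟩ 0
      exact ⟨d, hd.trans (keyEval f ⟨i, hi⟩)⟩
    · refine ⟨0, ?_⟩
      rw [map_zero]
      symm
      apply Polynomial.coeff_eq_zero_of_degree_lt
      refine lt_of_lt_of_le (Polynomial.degree_modByMonic_lt f hpK) ?_
      rw [degree_eq_natDegree hpK.ne_zero, haux]
      exact_mod_cast hi
  -- backward: coefficients of remainder lie in D → IntOn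
  have hbwd : (∀ i, ∃ c : D, algebraMap D K c = (f %ₘ pK).coeff i) →
      f ∈ IntOn D K {M : Matrix (Fin p.natDegree) (Fin p.natDegree) D |
        M.charpoly = p} := by
    intro hB M hM i j
    have hlift : (f %ₘ pK) ∈ Polynomial.lifts φ := by
      rw [Polynomial.lifts_iff_coeff_lifts]
      intro m
      obtain ⟨c, hc⟩ := hB m
      exact ⟨c, hc⟩
    obtain ⟨r0, hr0, -⟩ := Polynomial.mem_lifts_and_degree_eq hlift
    have hM' : M.charpoly = p := hM
    have hzero : aeval (M.map ⇑φ) pK = 0 := by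
      have hcm : (M.map ⇑φ).charpoly = pK := by
        rw [Matrix.charpoly_map, hM']
      rw [← hcm]
      exact Matrix.aeval_self_charpoly _
    have heval : aeval (M.map ⇑φ) f = (aeval M r0).map φ := by
      conv_lhs => rw [← Polynomial.modByMonic_add_div f pK]
      rw [map_add, map_mul, hzero, zero_mul, add_zero, ← hr0, hφ,
        Polynomial.aeval_map_algebraMap K]
      have hmm : M.map ⇑(algebraMap D K) = (Algebra.ofId D K).mapMatrix M := by
        ext a b
        simp [Algebra.ofId_apply]
      rw [hmm, Polynomial.aeval_algHom_apply]
      ext a b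
      simp [Algebra.ofId_apply]
    refine ⟨aeval M r0 i j, ?_⟩
    rw [heval]
    rfl
  have hiff1 : f ∈ IntOn D K {M : Matrix (Fin p.natDegree) (Fin p.natDegree) D |
      M.charpoly = p} ↔ ∀ i, ∃ c : D, algebraMap D K c = (f %ₘ pK).coeff i :=
    ⟨hfwd, hbwd⟩
  refine ⟨hiff1, hiff1.trans ⟨?_, ?_⟩⟩
  · intro hB
    exact ⟨f %ₘ pK, f /ₘ pK, hB, (Polynomial.modByMonic_add_div f pK).symm⟩
  · rintro ⟨r, q, hr, rfl⟩ i
    have hlift : r ∈ Polynomial.lifts φ := by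
      rw [Polynomial.lifts_iff_coeff_lifts]
      intro m
      obtain ⟨c, hc⟩ := hr m
      exact ⟨c, hc⟩
    obtain ⟨r0, hr0, -⟩ := Polynomial.mem_lifts_and_degree_eq hlift
    have hmod : (r + pK * q) %ₘ pK = r %ₘ pK := by
      rw [Polynomial.add_modByMonic,
        (Polynomial.modByMonic_eq_zero_iff_dvd hpK).mpr (dvd_mul_right _ _), add_zero]
    refine ⟨(r0 %ₘ p).coeff i, ?_⟩
    rw [hmod, ← hr0, hpKdef, ← Polynomial.map_modByMonic φ hp, Polynomial.coeff_map]
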